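/- Suppose a metric space (X,d) admits an isometric embedding φ : T → X of a 0-hyperbolic metric space (T, d_T) (i.e., d(φ(a), φ(b)) = d_T(a,b) for all a, b ∈ T) such that every point of X is within distance δ of φ(T). Then (X,d) is 6δ-hyperbolic. -/
import Mathlib

open Set

/-- Gromov product `(y|z)_x`. -/
noncomputable def gp {X : Type*} [MetricSpace X] (x y z : X) : ℝ :=
  (dist x y + dist x z - dist y z) / 2

/-- `δ`-hyperbolicity. -/
def IsDeltaHyp (X : Type*) [MetricSpace X] (δ : ℝ) : Prop :=
  ∀ p x y z : X, gp p x z ≥ min (gp p x y) (gp p y z) - δ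

/-- `γ` is a (constant-speed, unit-interval) geodesic from `x` to `y`. -/
def IsGeodesic {X : Type*} [MetricSpace X] (γ : ℝ → X) (x y : X) : Prop :=
  γ 0 = x ∧ γ 1 = y ∧
    ∀ s ∈ Icc (0:ℝ) 1, ∀ t ∈ Icc (0:ℝ) 1, dist (γ s) (γ t) = |s - t| * dist x y

/-- Geodesic space. -/
def GeodesicSpace (X : Type*) [MetricSpace X] : Prop :=
  ∀ x y : X, ∃ γ : ℝ → X, IsGeodesic γ x y

/-- (Weak, geodesic) `K`-convexity. -/
def KConvex {X : Type*} [MetricSpace X] (K : ℝ) (f : X → ℝ) : Prop :=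
  ∀ x y : X, ∃ γ : ℝ → X, IsGeodesic γ x y ∧
    ∀ t ∈ Icc (0:ℝ) 1,
      f (γ t) ≤ (1 - t) * f x + t * f y - K / 2 * (1 - t) * t * dist x y ^ 2

/-- `L`-Lipschitz continuity. -/
def LipschitzL {X : Type*} [MetricSpace X] (L : ℝ) (f : X → ℝ) : Prop :=
  ∀ x y : X, |f x - f y| ≤ L * dist x y

/-- `y` belongs to the proximal set `J^f_τ(x)`. -/
def IsProx {X : Type*} [MetricSpace X] (f : X → ℝ) (τ : ℝ) (x y : X) : Prop :=
  ∀ z : X, f y + dist x y ^ 2 / (2 * τ) ≤ f z + dist x z ^ 2 / (2 * τ)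

lemma gp_approx {X : Type*} [MetricSpace X] {δ : ℝ} {p x z p' x' z' : X}
    (hp : dist p p' ≤ δ) (hx : dist x x' ≤ δ) (hz : dist z z' ≤ δ) :
    gp p' x' z' - 3 * δ ≤ gp p x z := by
  unfold gp
  have h1 := dist_triangle4 p' p x x'
  have h2 := dist_triangle4 p' p z z'
  have h3 := dist_triangle4 x x' z' z
  linarith [dist_comm p p', dist_comm z z', dist_comm x x']

theorem near_tree_hyperbolic {X T : Type*} [MetricSpace X] [MetricSpace T]
    {δ : ℝ} (hδ : 0 ≤ δ) (hT : IsDeltaHyp T 0) (φ : T → X)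
    (hiso : ∀ a b : T, dist (φ a) (φ b) = dist a b)
    (hcover : ∀ x : X, ∃ a : T, dist x (φ a) ≤ δ) :
    IsDeltaHyp X (6 * δ) := by
  intro p x y z
  obtain ⟨ap, hp⟩ := hcover p
  obtain ⟨ax, hx⟩ := hcover x
  obtain ⟨ay, hy⟩ := hcover y
  obtain ⟨az, hz⟩ := hcover z
  have hgpT : ∀ a b c : T, gp (φ a) (φ b) (φ c) = gp a b c := by
    intro a b c; unfold gp; rw [hiso, hiso, hiso]
  have h1 : gp (φ ap) (φ ax) (φ az) - 3 * δ ≤ gp p x z := gp_approx hp hx hz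
  have h2 : gp p x y - 3 * δ ≤ gp (φ ap) (φ ax) (φ ay) :=
    gp_approx (dist_comm p (φ ap) ▸ hp) (dist_comm x (φ ax) ▸ hx) (dist_comm y (φ ay) ▸ hy)
  have h3 : gp p y z - 3 * δ ≤ gp (φ ap) (φ ay) (φ az) :=
    gp_approx (dist_comm p (φ ap) ▸ hp) (dist_comm y (φ ay) ▸ hy) (dist_comm z (φ az) ▸ hz)
  have hT' := hT ap ax ay az
  rw [hgpT] at h1 h2 h3
  have hmin : min (gp p x y - 3 * δ) (gp p y z - 3 * δ)
      ≤ min (gp ap ax ay) (gp ap ay az) := min_le_min h2 h3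
  rw [min_sub_sub_right] at hmin
  simp only [ge_iff_le] at hT' ⊢
  linarith
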